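/- arXiv:1703.01691 — 3 statements merged into one kernel-verified Lean document; each statement's English description precedes it below -/
import Mathlib

section
/- Every tree on n ≥ 2 vertices admits a partition of its edge set into at most ⌈3(n−1)/4⌉ paths. -/
open SimpleGraph

namespace PathDecomp

set_option linter.unusedSectionVars false
set_option linter.unusedVariables false
set_option maxHeartbeats 1000000

variable {V : Type*}




noncomputable def deg (G : SimpleGraph V) (w : V) : ℕ := (G.neighborSet w).ncard

lemma coe_msg {G G' : SimpleGraph V} (h : G ≤ G') :
    ⇑(Hom.ofLE h) = id := rfl

lemma edges_mapLe {G G' : SimpleGraph V} (h : G ≤ G') {u v : V} (p : G.Walk u v) :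
    (p.mapLe h).edges = p.edges := by
  simp [Walk.mapLe, Walk.edges_map, coe_msg, Sym2.map_id]

lemma support_mapLe {G G' : SimpleGraph V} (h : G ≤ G') {u v : V} (p : G.Walk u v) :
    (p.mapLe h).support = p.support := by
  simp [Walk.mapLe, Walk.support_map, coe_msg]

lemma exists_adj_of_mem_support {G : SimpleGraph V} {u v w : V} (p : G.Walk u v)
    (hw : w ∈ p.support) (hlen : 0 < p.length) : ∃ z, G.Adj w z := by
  induction p with
  | nil => simp at hlen
  | @cons x y z h q ih =>
    rw [Walk.support_cons, List.mem_cons] at hw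
    rcases hw with rfl | hw
    · exact ⟨y, h⟩
    · cases q with
      | nil => simp at hw; subst hw; exact ⟨x, h.symm⟩
      | @cons a b c h' q' => exact ih hw (by simp)

lemma exists_leaf [Fintype V] (G : SimpleGraph V) (hG : G.IsAcyclic)
    (hne : G.edgeSet.Nonempty) : ∃ ℓ a : V, G.Adj ℓ a ∧ ∀ x, G.Adj ℓ x → x = a := by
  classical
  obtain ⟨e, he⟩ := hne
  induction e using Sym2.ind with | _ x₀ y₀ =>
  rw [mem_edgeSet] at he
  set Q : ℕ → Prop := fun n => ∃ (x y : V) (p : G.Walk x y), p.IsPath ∧ p.length = n with hQ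
  have hQ1 : Q 1 := ⟨x₀, y₀, (Path.singleton he).1, (Path.singleton he).2, by simp [Path.singleton]⟩
  have hN : 1 ≤ Fintype.card V := Fintype.card_pos_iff.mpr ⟨x₀⟩
  set n := Nat.findGreatest Q (Fintype.card V) with hn
  have h1 : 1 ≤ n := Nat.le_findGreatest hN hQ1
  have hQn : Q n := Nat.findGreatest_spec hN hQ1
  obtain ⟨x, y, p, hp, hlen⟩ := hQn
  cases p with
  | nil => simp at hlen; omega
  | @cons x w y h q =>
    refine ⟨x, w, h, fun z hz => ?_⟩
    by_contra hzw
    have hq : q.IsPath ∧ x ∉ q.support := (Walk.cons_isPath_iff h q).mp hp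
    by_cases hzs : z ∈ (Walk.cons h q).support
    · -- build a cycle, contradiction with acyclicity
      have hzx : z ≠ x := fun hh => G.irrefl (hh ▸ hz)
      have hzq : z ∈ q.support := by
        rw [Walk.support_cons, List.mem_cons] at hzs
        tauto
      have hr : (q.takeUntil z hzq).IsPath := hq.1.takeUntil hzq
      have hxr : x ∉ (q.takeUntil z hzq).support :=
        fun hx => hq.2 (Walk.support_takeUntil_subset _ hzq hx)
      have hpath2 : (Walk.cons h (q.takeUntil z hzq)).IsPath := hr.cons hxr
      have hedge : s(z, x) ∉ (Walk.cons h (q.takeUntil z hzq)).edges := by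
        rw [Walk.edges_cons, List.mem_cons]
        rintro (hc | hc)
        · rw [Sym2.eq_iff] at hc
          rcases hc with ⟨rfl, _⟩ | ⟨h1, h2⟩
          · exact hzx rfl
          · exact hzw h1
        · exact hxr (Walk.snd_mem_support_of_mem_edges _ hc)
      exact hG _ (Path.cons_isCycle ⟨Walk.cons h (q.takeUntil z hzq), hpath2⟩ hz.symm hedge)
    · -- extend the maximal path, contradiction
      have hp' : (Walk.cons hz.symm (Walk.cons h q)).IsPath := hp.cons hzs
      have hL : (Walk.cons hz.symm (Walk.cons h q)).length = n + 1 := by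
        rw [Walk.length_cons, hlen]
      have : Q (n + 1) := ⟨z, y, _, hp', hL⟩
      have hlt := hp'.length_lt
      rw [hL] at hlt
      exact Nat.findGreatest_is_greatest (n := Fintype.card V) (by omega) (by omega) this


section Del
variable [Fintype V] {G : SimpleGraph V} {ℓ a : V}

lemma nbr_other (hwl : w ≠ ℓ) (hwa : w ≠ a) :
    (G.deleteEdges {s(ℓ,a)}).neighborSet w = G.neighborSet w := by
  ext x
  simp only [mem_neighborSet, deleteEdges_adj, Set.mem_singleton_iff]
  refine ⟨fun h => h.1, fun h => ⟨h, fun hc => ?_⟩⟩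
  rw [Sym2.eq_iff] at hc
  rcases hc with ⟨rfl, _⟩ | ⟨rfl, _⟩
  · exact hwl rfl
  · exact hwa rfl

lemma nbr_a (hla : G.Adj ℓ a) :
    (G.deleteEdges {s(ℓ,a)}).neighborSet a = G.neighborSet a \ {ℓ} := by
  ext x
  simp only [mem_neighborSet, deleteEdges_adj, Set.mem_singleton_iff, Set.mem_diff]
  constructor
  · rintro ⟨h1, h2⟩
    refine ⟨h1, fun hc => h2 ?_⟩
    subst hc
    rw [Sym2.eq_swap]
  · rintro ⟨h1, h2⟩
    refine ⟨h1, fun hc => ?_⟩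
    rw [Sym2.eq_iff] at hc
    rcases hc with ⟨rfl, rfl⟩ | ⟨_, rfl⟩
    · exact G.irrefl h1
    · exact h2 rfl

lemma nbr_l (hla : G.Adj ℓ a) (hleaf : ∀ x, G.Adj ℓ x → x = a) :
    G.neighborSet ℓ = {a} := by
  ext x
  simp only [mem_neighborSet, Set.mem_singleton_iff]
  exact ⟨fun h => hleaf x h, fun h => h ▸ hla⟩

lemma nbr_l' (hla : G.Adj ℓ a) (hleaf : ∀ x, G.Adj ℓ x → x = a) :
    (G.deleteEdges {s(ℓ,a)}).neighborSet ℓ = ∅ := by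
  ext x
  simp only [mem_neighborSet, deleteEdges_adj, Set.mem_singleton_iff, Set.mem_empty_iff_false,
    iff_false, not_and, not_not]
  intro h
  rw [hleaf x h]

lemma deg_other (hwl : w ≠ ℓ) (hwa : w ≠ a) :
    deg (G.deleteEdges {s(ℓ,a)}) w = deg G w := by
  rw [deg, deg, nbr_other hwl hwa]

lemma deg_a (hla : G.Adj ℓ a) : deg G a = deg (G.deleteEdges {s(ℓ,a)}) a + 1 := by
  have hmem : ℓ ∈ G.neighborSet a := hla.symm
  have hpos : 0 < (G.neighborSet a).ncard :=
    (Set.ncard_pos (Set.toFinite _)).mpr ⟨ℓ, hmem⟩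
  rw [deg, deg, nbr_a hla, Set.ncard_diff_singleton_of_mem hmem]
  omega

lemma deg_l (hla : G.Adj ℓ a) (hleaf : ∀ x, G.Adj ℓ x → x = a) : deg G ℓ = 1 := by
  rw [deg, nbr_l hla hleaf, Set.ncard_singleton]

lemma deg_l' (hla : G.Adj ℓ a) (hleaf : ∀ x, G.Adj ℓ x → x = a) :
    deg (G.deleteEdges {s(ℓ,a)}) ℓ = 0 := by
  rw [deg, nbr_l' hla hleaf, Set.ncard_empty]

end Del

def Bundle (G : SimpleGraph V) := Σ a b : V, G.Walk a b

def EP {G : SimpleGraph V} {k : ℕ} (P : Fin k → Bundle G) (x : Fin k × Bool) : V :=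
  cond x.2 (P x.1).1 (P x.1).2.1

def Good (G : SimpleGraph V) {k : ℕ} (P : Fin k → Bundle G) : Prop :=
  (∀ i, (P i).2.2.IsPath) ∧
  (∀ e ∈ G.edgeSet, ∃! i, e ∈ (P i).2.2.edges) ∧
  (∀ w : V, (Odd (deg G w) → ∃! x : Fin k × Bool, EP P x = w) ∧
            (¬ Odd (deg G w) → ∀ x : Fin k × Bool, EP P x ≠ w))
def mapB {G G' : SimpleGraph V} (hle : G ≤ G') (b : Bundle G) : Bundle G' :=
  ⟨b.1, b.2.1, b.2.2.mapLe hle⟩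

@[simp] lemma mapB_fst {G G' : SimpleGraph V} (hle : G ≤ G') (b : Bundle G) :
    (mapB hle b).1 = b.1 := rfl
@[simp] lemma mapB_snd {G G' : SimpleGraph V} (hle : G ≤ G') (b : Bundle G) :
    (mapB hle b).2.1 = b.2.1 := rfl
@[simp] lemma mapB_edges {G G' : SimpleGraph V} (hle : G ≤ G') (b : Bundle G) :
    (mapB hle b).2.2.edges = b.2.2.edges := edges_mapLe hle _
lemma mapB_isPath {G G' : SimpleGraph V} (hle : G ≤ G') (b : Bundle G)
    (h : b.2.2.IsPath) : (mapB hle b).2.2.IsPath := h.mapLe hle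
lemma concat_isPath {G : SimpleGraph V} {u v w : V} {p : G.Walk u v} (hp : p.IsPath)
    (h : G.Adj v w) (hw : w ∉ p.support) : (p.concat h).IsPath := by
  have hrev : (p.concat h).reverse = Walk.cons h.symm p.reverse := p.reverse_concat h
  rw [← Walk.isPath_reverse_iff, hrev]
  exact hp.reverse.cons (by rwa [Walk.support_reverse, List.mem_reverse])

lemma stepA [Fintype V] {G : SimpleGraph V} {ℓ a : V}
    (hla : G.Adj ℓ a) (hleaf : ∀ x, G.Adj ℓ x → x = a)
    {k : ℕ} {P : Fin k → Bundle (G.deleteEdges {s(ℓ,a)})}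
    (hg : Good (G.deleteEdges {s(ℓ,a)}) P)
    (hpar : ¬ Odd (deg (G.deleteEdges {s(ℓ,a)}) a)) :
    ∃ (k' : ℕ) (P' : Fin k' → Bundle G), Good G P' := by
  classical
  have hle : G.deleteEdges {s(ℓ,a)} ≤ G := deleteEdges_le _
  obtain ⟨hg1, hg2, hg3⟩ := hg
  refine ⟨k+1, Fin.snoc (fun i => mapB hle (P i)) ⟨a, ℓ, Walk.cons hla.symm Walk.nil⟩, ?_⟩
  set Pn : Fin (k+1) → Bundle G :=
    Fin.snoc (fun i => mapB hle (P i)) ⟨a, ℓ, Walk.cons hla.symm Walk.nil⟩ with hPn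
  have hlast : Pn (Fin.last k) = ⟨a, ℓ, Walk.cons hla.symm Walk.nil⟩ := Fin.snoc_last _ _
  have hcs : ∀ i : Fin k, Pn i.castSucc = mapB hle (P i) := fun i => Fin.snoc_castSucc _ _ i
  have hedgesc : ∀ i : Fin k, (Pn i.castSucc).2.2.edges = (P i).2.2.edges := by
    intro i; rw [hcs]; exact edges_mapLe hle _
  have hedgesl : (Pn (Fin.last k)).2.2.edges = [s(a, ℓ)] := by rw [hlast]; simp
  have hEPc : ∀ (i : Fin k) (s : Bool), EP Pn (i.castSucc, s) = EP P (i, s) := by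
    intro i s
    cases s
    · show (Pn i.castSucc).2.1 = (P i).2.1
      rw [hcs]; rfl
    · show (Pn i.castSucc).1 = (P i).1
      rw [hcs]; rfl
  have hEPlt : EP Pn (Fin.last k, true) = a := by
    show (Pn (Fin.last k)).1 = a
    rw [hlast]
  have hEPlf : EP Pn (Fin.last k, false) = ℓ := by
    show (Pn (Fin.last k)).2.1 = ℓ
    rw [hlast]
  have hla' : ℓ ≠ a := hla.ne
  have hdega : deg G a = deg (G.deleteEdges {s(ℓ,a)}) a + 1 := deg_a hla
  have hOa : Odd (deg G a) := by rw [hdega, Nat.odd_add_one]; exact hpar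
  have hdegl : deg G ℓ = 1 := deg_l hla hleaf
  have hdegl' : deg (G.deleteEdges {s(ℓ,a)}) ℓ = 0 := deg_l' hla hleaf
  have hES : (G.deleteEdges {s(ℓ,a)}).edgeSet = G.edgeSet \ {s(ℓ,a)} := edgeSet_deleteEdges _
  refine ⟨?_, ?_, ?_⟩
  · intro j
    induction j using Fin.lastCases with
    | last => rw [hlast]; exact (Path.singleton hla.symm).2
    | cast i => rw [hcs]; exact mapB_isPath hle _ (hg1 i)
  · intro e he
    by_cases heq : e = s(ℓ,a)
    · refine ⟨Fin.last k, ?_, ?_⟩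
      · show e ∈ (Pn (Fin.last k)).2.2.edges
        rw [hedgesl]; simp [heq, Sym2.eq_swap]
      · intro j hj
        induction j using Fin.lastCases with
        | last => rfl
        | cast i =>
          replace hj : e ∈ (Pn i.castSucc).2.2.edges := hj
          rw [hedgesc] at hj
          have h2 := Walk.edges_subset_edgeSet _ hj
          rw [hES] at h2
          exact absurd heq (by simpa using h2.2)
    · have he' : e ∈ (G.deleteEdges {s(ℓ,a)}).edgeSet := by
        rw [hES]; exact ⟨he, by simpa using heq⟩
      obtain ⟨i, hi, hiu⟩ := hg2 e he'
      refine ⟨i.castSucc, ?_, ?_⟩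
      · show e ∈ (Pn i.castSucc).2.2.edges
        rw [hedgesc]; exact hi
      · intro j hj
        induction j using Fin.lastCases with
        | last =>
          replace hj : e ∈ (Pn (Fin.last k)).2.2.edges := hj
          rw [hedgesl] at hj; simp only [List.mem_singleton] at hj
          exact absurd (by rw [hj, Sym2.eq_swap]) heq
        | cast i' =>
          replace hj : e ∈ (Pn i'.castSucc).2.2.edges := hj
          rw [hedgesc] at hj
          rw [hiu i' hj]
  · intro w
    by_cases hwl : w = ℓ
    · subst hwl
      constructor
      · intro _
        refine ⟨(Fin.last k, false), hEPlf, ?_⟩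
        rintro ⟨j, s⟩ hy
        induction j using Fin.lastCases with
        | last =>
          cases s with
          | true =>
            replace hy : EP Pn (Fin.last k, true) = w := hy
            rw [hEPlt] at hy; exact absurd hy (Ne.symm hla')
          | false => rfl
        | cast i =>
          replace hy : EP Pn (i.castSucc, s) = w := hy
          rw [hEPc] at hy
          exact absurd hy ((hg3 w).2 (by rw [hdegl']; simp) _)
      · intro hO
        rw [hdegl] at hO
        simp at hO
    · by_cases hwa : w = a
      · subst hwa
        constructor
        · intro _
          refine ⟨(Fin.last k, true), hEPlt, ?_⟩
          rintro ⟨j, s⟩ hy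
          induction j using Fin.lastCases with
          | last =>
            cases s with
            | true => rfl
            | false =>
              replace hy : EP Pn (Fin.last k, false) = w := hy
              rw [hEPlf] at hy; exact absurd hy hla'
          | cast i =>
            replace hy : EP Pn (i.castSucc, s) = w := hy
            rw [hEPc] at hy
            exact absurd hy ((hg3 w).2 hpar _)
        · intro hQ; exact absurd hOa hQ
      · have hdw : deg (G.deleteEdges {s(ℓ,a)}) w = deg G w := deg_other hwl hwa
        constructor
        · intro hO
          obtain ⟨⟨i, s⟩, hx, hxu⟩ := (hg3 w).1 (by rwa [hdw])
          refine ⟨(i.castSucc, s), ?_, ?_⟩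
          · show EP Pn (i.castSucc, s) = w
            rw [hEPc]; exact hx
          · rintro ⟨j, s'⟩ hy
            induction j using Fin.lastCases with
            | last =>
              cases s' with
              | true =>
                replace hy : EP Pn (Fin.last k, true) = w := hy
                rw [hEPlt] at hy; exact absurd hy.symm hwa
              | false =>
                replace hy : EP Pn (Fin.last k, false) = w := hy
                rw [hEPlf] at hy; exact absurd hy.symm hwl
            | cast i' =>
              replace hy : EP Pn (i'.castSucc, s') = w := hy
              rw [hEPc] at hy
              have h3 := hxu (i', s') hy
              rw [Prod.mk.injEq] at h3 ⊢
              exact ⟨by rw [h3.1], h3.2⟩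
        · intro hO
          rintro ⟨j, s⟩ hy
          induction j using Fin.lastCases with
          | last =>
            cases s with
            | true =>
              replace hy : EP Pn (Fin.last k, true) = w := hy
              rw [hEPlt] at hy; exact absurd hy.symm hwa
            | false =>
              replace hy : EP Pn (Fin.last k, false) = w := hy
              rw [hEPlf] at hy; exact absurd hy.symm hwl
          | cast i =>
            replace hy : EP Pn (i.castSucc, s) = w := hy
            rw [hEPc] at hy
            exact (hg3 w).2 (by rwa [hdw]) _ hy
lemma stepB [Fintype V] {G : SimpleGraph V} {ℓ a : V}
    (hla : G.Adj ℓ a) (hleaf : ∀ x, G.Adj ℓ x → x = a)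
    {k : ℕ} {P : Fin k → Bundle (G.deleteEdges {s(ℓ,a)})}
    (hg : Good (G.deleteEdges {s(ℓ,a)}) P)
    (hpar : Odd (deg (G.deleteEdges {s(ℓ,a)}) a)) :
    ∃ (k' : ℕ) (P' : Fin k' → Bundle G), Good G P' := by
  classical
  have hle : G.deleteEdges {s(ℓ,a)} ≤ G := deleteEdges_le _
  obtain ⟨hg1, hg2, hg3⟩ := hg
  have hla' : ℓ ≠ a := hla.ne
  have hdega : deg G a = deg (G.deleteEdges {s(ℓ,a)}) a + 1 := deg_a hla
  have hdegl : deg G ℓ = 1 := deg_l hla hleaf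
  have hdegl' : deg (G.deleteEdges {s(ℓ,a)}) ℓ = 0 := deg_l' hla hleaf
  have hES : (G.deleteEdges {s(ℓ,a)}).edgeSet = G.edgeSet \ {s(ℓ,a)} := edgeSet_deleteEdges _
  have hnotOa : ¬ Odd (deg G a) := by
    rw [hdega, Nat.odd_add_one, not_not]; exact hpar
  obtain ⟨⟨i₀, s₀⟩, hx₀, hxu₀⟩ := (hg3 a).1 hpar
  -- the two endpoints of P i₀ are distinct
  have hne : (P i₀).1 ≠ (P i₀).2.1 := by
    intro heq
    have h1 : EP P (i₀, true) = a ∧ EP P (i₀, false) = a := by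
      cases s₀
      · exact ⟨by show (P i₀).1 = a; rw [heq]; exact hx₀, hx₀⟩
      · exact ⟨hx₀, by show (P i₀).2.1 = a; rw [← heq]; exact hx₀⟩
    have h2 := (hxu₀ _ h1.1).trans (hxu₀ _ h1.2).symm
    simp at h2
  have hlen : 0 < (P i₀).2.2.length := by
    rcases Nat.eq_zero_or_pos (P i₀).2.2.length with h | h
    · exact absurd (Walk.eq_of_length_eq_zero h) hne
    · exact h
  have hlsup : ℓ ∉ (P i₀).2.2.support := by
    intro hmem
    obtain ⟨z, hz⟩ := exists_adj_of_mem_support _ hmem hlen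
    have : z ∈ (G.deleteEdges {s(ℓ,a)}).neighborSet ℓ := hz
    rw [nbr_l' hla hleaf] at this
    exact this
  -- normalize so that the endpoint `a` is the first coordinate
  obtain ⟨b₀, hb1, hb2, hbe, hbs, hbp⟩ :
      ∃ b₀ : Bundle (G.deleteEdges {s(ℓ,a)}), b₀.1 = a ∧ b₀.2.1 = EP P (i₀, !s₀) ∧
        (∀ e, e ∈ b₀.2.2.edges ↔ e ∈ (P i₀).2.2.edges) ∧
        (∀ z, z ∈ b₀.2.2.support ↔ z ∈ (P i₀).2.2.support) ∧
        b₀.2.2.IsPath := by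
    cases s₀
    · -- s₀ = false : a = (P i₀).2.1 ; reverse
      refine ⟨⟨(P i₀).2.1, (P i₀).1, (P i₀).2.2.reverse⟩, hx₀, rfl, ?_, ?_, (hg1 i₀).reverse⟩
      · intro e; simp [Walk.edges_reverse]
      · intro z; simp [Walk.support_reverse]
    · exact ⟨P i₀, hx₀, rfl, fun _ => Iff.rfl, fun _ => Iff.rfl, hg1 i₀⟩
  have hadj : G.Adj ℓ b₀.1 := by rw [hb1]; exact hla
  set newB : Bundle G := ⟨ℓ, b₀.2.1, Walk.cons hadj (b₀.2.2.mapLe hle)⟩ with hnewB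
  refine ⟨k, Function.update (fun i => mapB hle (P i)) i₀ newB, ?_⟩
  set Pn : Fin k → Bundle G := Function.update (fun i => mapB hle (P i)) i₀ newB with hPn
  have hup : Pn i₀ = newB := Function.update_self _ _ _
  have hoth : ∀ j, j ≠ i₀ → Pn j = mapB hle (P j) := fun j hj => Function.update_of_ne hj _ _
  -- edge membership of the new bundle
  have hedges0 : ∀ e, e ∈ (Pn i₀).2.2.edges ↔ (e = s(ℓ,a) ∨ e ∈ (P i₀).2.2.edges) := by
    intro e
    rw [hup]
    show e ∈ (Walk.cons hadj (b₀.2.2.mapLe hle)).edges ↔ _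
    rw [Walk.edges_cons, List.mem_cons, edges_mapLe]
    constructor
    · rintro (h | h)
      · left; rw [h, hb1]
      · right; exact (hbe e).mp h
    · rintro (h | h)
      · left; rw [h, hb1]
      · right; exact (hbe e).mpr h
  have hedgeso : ∀ j, j ≠ i₀ → ∀ e, (e ∈ (Pn j).2.2.edges ↔ e ∈ (P j).2.2.edges) := by
    intro j hj e
    rw [hoth j hj, mapB_edges]
  -- endpoints
  have hEP0t : EP Pn (i₀, true) = ℓ := by
    show (Pn i₀).1 = ℓ
    rw [hup]
  have hEP0f : EP Pn (i₀, false) = EP P (i₀, !s₀) := by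
    show (Pn i₀).2.1 = _
    rw [hup]
    exact hb2
  have hEPo : ∀ (j : Fin k) (s : Bool), j ≠ i₀ → EP Pn (j, s) = EP P (j, s) := by
    intro j s hj
    cases s
    · show (Pn j).2.1 = (P j).2.1
      rw [hoth j hj]; rfl
    · show (Pn j).1 = (P j).1
      rw [hoth j hj]; rfl
  -- old endpoints never equal ℓ
  have hnotl : ∀ x : Fin k × Bool, EP P x ≠ ℓ :=
    (hg3 ℓ).2 (by rw [hdegl']; simp)
  -- (i₀, !s₀) is not an endpoint equal to a
  have hxne : EP P (i₀, !s₀) ≠ a := by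
    intro h
    have := hxu₀ _ h
    rw [Prod.mk.injEq] at this
    cases s₀ <;> simp at this
  refine ⟨?_, ?_, ?_⟩
  · -- paths
    intro j
    by_cases hj : j = i₀
    · subst hj
      rw [hup]
      show (Walk.cons hadj (b₀.2.2.mapLe hle)).IsPath
      refine (hbp.mapLe hle).cons ?_
      rw [support_mapLe]
      intro hmem
      exact hlsup ((hbs ℓ).mp hmem)
    · rw [hoth j hj]
      exact mapB_isPath hle _ (hg1 j)
  · -- edges
    intro e he
    by_cases heq : e = s(ℓ,a)
    · refine ⟨i₀, ?_, ?_⟩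
      · show e ∈ (Pn i₀).2.2.edges
        rw [hedges0]; exact Or.inl heq
      · intro j hj
        by_cases hji : j = i₀
        · exact hji
        · replace hj : e ∈ (Pn j).2.2.edges := hj
          rw [hedgeso j hji] at hj
          have h2 := Walk.edges_subset_edgeSet _ hj
          rw [hES] at h2
          exact absurd heq (by simpa using h2.2)
    · have he' : e ∈ (G.deleteEdges {s(ℓ,a)}).edgeSet := by
        rw [hES]; exact ⟨he, by simpa using heq⟩
      obtain ⟨i, hi, hiu⟩ := hg2 e he'
      refine ⟨i, ?_, ?_⟩
      · show e ∈ (Pn i).2.2.edges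
        by_cases hii : i = i₀
        · subst hii; rw [hedges0]; exact Or.inr hi
        · rw [hedgeso i hii]; exact hi
      · intro j hj
        replace hj : e ∈ (Pn j).2.2.edges := hj
        by_cases hji : j = i₀
        · subst hji
          rw [hedges0] at hj
          rcases hj with h | h
          · exact absurd h heq
          · exact hiu _ h
        · rw [hedgeso j hji] at hj
          exact hiu _ hj
  · -- endpoints
    intro w
    by_cases hwl : w = ℓ
    · subst hwl
      constructor
      · intro _
        refine ⟨(i₀, true), hEP0t, ?_⟩
        rintro ⟨j, s⟩ hy
        replace hy : EP Pn (j, s) = w := hy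
        by_cases hji : j = i₀
        · subst hji
          cases s
          · rw [hEP0f] at hy
            exact absurd hy (hnotl _)
          · rfl
        · rw [hEPo j s hji] at hy
          exact absurd hy (hnotl _)
      · intro hO
        rw [hdegl] at hO
        simp at hO
    · by_cases hwa : w = a
      · subst hwa
        constructor
        · intro hO
          exact absurd hO hnotOa
        · intro _
          rintro ⟨j, s⟩ hy
          replace hy : EP Pn (j, s) = w := hy
          by_cases hji : j = i₀
          · subst hji
            cases s
            · rw [hEP0f] at hy
              exact hxne hy
            · rw [hEP0t] at hy
              exact hla' hy
          · rw [hEPo j s hji] at hy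
            have h2 := hxu₀ _ hy
            rw [Prod.mk.injEq] at h2
            exact hji h2.1
      · have hdw : deg (G.deleteEdges {s(ℓ,a)}) w = deg G w := deg_other hwl hwa
        -- helper: map new endpoint equation to old one
        have hkey : ∀ (j : Fin k) (s : Bool), EP Pn (j, s) = w →
            ∃ s' : Bool, EP P (j, s') = w ∧ EP Pn (j, s) = EP P (j, s') ∧
              ((j = i₀ ∧ s = false ∧ s' = !s₀) ∨ (j ≠ i₀ ∧ s' = s)) := by
          intro j s hy
          by_cases hji : j = i₀
          · subst hji
            cases s
            · exact ⟨!s₀, by rwa [hEP0f] at hy, hEP0f, Or.inl ⟨rfl, rfl, rfl⟩⟩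
            · rw [hEP0t] at hy
              exact absurd hy.symm hwl
          · exact ⟨s, by rwa [hEPo j s hji] at hy, hEPo j s hji, Or.inr ⟨hji, rfl⟩⟩
        constructor
        · intro hO
          obtain ⟨⟨i, s⟩, hx, hxu⟩ := (hg3 w).1 (by rwa [hdw])
          -- the new index corresponding to (i, s)
          by_cases hii : i = i₀
          · subst hii
            -- then s must be !s₀ (since EP P (i₀,s₀) = a ≠ w)
            have hss : s = !s₀ := by
              by_contra hss
              have hss2 : s = s₀ := by
                cases s <;> cases s₀ <;> first | rfl | exact absurd rfl hss
              subst hss2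
              exact hwa (hx.symm.trans hx₀)
            refine ⟨(i, false), ?_, ?_⟩
            · show EP Pn (i, false) = w
              rw [hEP0f, ← hss]; exact hx
            · rintro ⟨j, s'⟩ hy
              replace hy : EP Pn (j, s') = w := hy
              obtain ⟨s'', hs1, _, hs3⟩ := hkey j s' hy
              have h4 := hxu _ hs1
              rw [Prod.mk.injEq] at h4
              rcases hs3 with ⟨rfl, hsf, _⟩ | ⟨hjne, rfl⟩
              · rw [Prod.mk.injEq]
                exact ⟨rfl, hsf⟩
              · exact absurd h4.1 hjne
          · refine ⟨(i, s), ?_, ?_⟩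
            · show EP Pn (i, s) = w
              rw [hEPo i s hii]; exact hx
            · rintro ⟨j, s'⟩ hy
              replace hy : EP Pn (j, s') = w := hy
              obtain ⟨s'', hs1, _, hs3⟩ := hkey j s' hy
              have h4 := hxu _ hs1
              rw [Prod.mk.injEq] at h4
              rcases hs3 with ⟨rfl, hsf, hsn⟩ | ⟨hjne, rfl⟩
              · -- j = i₀, so i = i₀ by h4, contradiction
                exact (hii h4.1.symm).elim
              · rw [Prod.mk.injEq]
                exact ⟨h4.1, h4.2⟩
        · intro hO
          rintro ⟨j, s⟩ hy
          replace hy : EP Pn (j, s) = w := hy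
          obtain ⟨s'', hs1, _, _⟩ := hkey j s hy
          exact (hg3 w).2 (by rwa [hdw]) _ hs1

lemma aux [Fintype V] : ∀ (m : ℕ) (G : SimpleGraph V), G.IsAcyclic → G.edgeSet.ncard = m →
    ∃ (k : ℕ) (P : Fin k → Bundle G), Good G P := by
  intro m
  induction m with
  | zero =>
    intro G hG hm
    have hE : G.edgeSet = ∅ := (Set.ncard_eq_zero (Set.toFinite _)).mp hm
    refine ⟨0, Fin.elim0, fun i => i.elim0, fun e he => ?_, fun w => ⟨?_, ?_⟩⟩
    · rw [hE] at he
      exact absurd he (Set.notMem_empty _)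
    · intro hO
      exfalso
      have hnb : G.neighborSet w = ∅ := by
        ext x
        simp only [mem_neighborSet, Set.mem_empty_iff_false, iff_false]
        intro h
        have hx : s(w,x) ∈ G.edgeSet := h
        rw [hE] at hx
        exact (Set.notMem_empty _) hx
      rw [deg, hnb, Set.ncard_empty] at hO
      simp at hO
    · intro _ x
      exact x.1.elim0
  | succ m ih =>
    intro G hG hm
    have hne : G.edgeSet.Nonempty := by
      rw [Set.nonempty_iff_ne_empty]
      intro h
      rw [h, Set.ncard_empty] at hm
      exact (Nat.succ_ne_zero m) hm.symm
    obtain ⟨ℓ, a, hla, hleaf⟩ := exists_leaf G hG hne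
    have hle : G.deleteEdges {s(ℓ,a)} ≤ G := deleteEdges_le _
    have hac : (G.deleteEdges {s(ℓ,a)}).IsAcyclic :=
      fun v c hc => hG (c.mapLe hle) (hc.mapLe hle)
    have hm' : (G.deleteEdges {s(ℓ,a)}).edgeSet.ncard = m := by
      rw [edgeSet_deleteEdges,
        Set.ncard_diff_singleton_of_mem ((SimpleGraph.mem_edgeSet G).mpr hla), hm]
      omega
    obtain ⟨k, P, hgood⟩ := ih (G.deleteEdges {s(ℓ,a)}) hac hm'
    by_cases hpar : Odd (deg (G.deleteEdges {s(ℓ,a)}) a)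
    · exact stepB hla hleaf hgood hpar
    · exact stepA hla hleaf hgood hpar

end PathDecomp

/-- Every tree on `n ≥ 2` vertices admits a partition of its edge set into at most
`⌈3(n-1)/4⌉` paths (written `(3*(n-1) + 3) / 4` in natural-number arithmetic). -/
theorem stmt4 {V : Type*} [Fintype V] (G : SimpleGraph V)
    (hT : G.IsTree) (hn : 2 ≤ Fintype.card V) :
    ∃ (k : ℕ) (u v : Fin k → V) (p : ∀ i, G.Walk (u i) (v i)),
      (∀ i, (p i).IsPath) ∧
      (∀ e ∈ G.edgeSet, ∃! i, e ∈ (p i).edges) ∧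
      k ≤ (3 * (Fintype.card V - 1) + 3) / 4 := by
  classical
  obtain ⟨k, P, h1, h2, h3⟩ := PathDecomp.aux G.edgeSet.ncard G hT.IsAcyclic rfl
  refine ⟨k, fun i => (P i).1, fun i => (P i).2.1, fun i => (P i).2.2, h1, h2, ?_⟩
  have hinj : Function.Injective (PathDecomp.EP P) := by
    intro x y hxy
    by_cases hO : Odd (PathDecomp.deg G (PathDecomp.EP P y))
    · obtain ⟨z, hz, hzu⟩ := (h3 _).1 hO
      exact (hzu x hxy).trans (hzu y rfl).symm
    · exact absurd rfl ((h3 _).2 hO y)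
  have hcard := Fintype.card_le_of_injective _ hinj
  simp only [Fintype.card_prod, Fintype.card_fin, Fintype.card_bool] at hcard
  rw [Nat.le_div_iff_mul_le (by norm_num : (0:ℕ) < 4)]
  omega
end

section
/- The edges of every maximal outerplanar graph on n ≥ 2 vertices can be partitioned into two trees (two edge-disjoint spanning forests whose union is the whole edge set, each of which is a tree). -/
/-- Maximal outerplanar graphs via the standard inductive (stacking) construction. -/
def IsMaxOuterplanar {V : Type*} [Fintype V] [DecidableEq V] (G : SimpleGraph V) : Prop :=
  ∃ σ : Fin (Fintype.card V) ≃ V,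
    (∀ h : 2 ≤ Fintype.card V, G.Adj (σ ⟨0, by omega⟩) (σ ⟨1, by omega⟩)) ∧
    (∀ j : Fin (Fintype.card V), 2 ≤ (j : ℕ) →
      ∃ a b : Fin (Fintype.card V), a < j ∧ b < j ∧ a ≠ b ∧ G.Adj (σ a) (σ b) ∧
        ∀ i : Fin (Fintype.card V), i < j → (G.Adj (σ i) (σ j) ↔ i = a ∨ i = b))


section Aux

open SimpleGraph

/-- Adding a pendant edge to an acyclic graph keeps it acyclic. -/
lemma acyclic_sup_edge {V : Type*} [DecidableEq V] {G₀ : SimpleGraph V} (hac : G₀.IsAcyclic)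
    {x y : V} (hxy : x ≠ y) (hy : ∀ z, ¬ G₀.Adj y z) :
    (G₀ ⊔ SimpleGraph.fromEdgeSet {s(x,y)}).IsAcyclic := by
  intro v c hc
  have hadj : ∀ {u w : V}, (G₀ ⊔ SimpleGraph.fromEdgeSet {s(x,y)}).Adj u w → u = y → w = x := by
    intro u w h hu
    rcases h with h | h
    · exact absurd (hu ▸ h) (hy w)
    · have h2 : s(u, w) = s(x, y) := (SimpleGraph.fromEdgeSet_adj (s := {s(x,y)})).mp h |>.1
      rcases Sym2.eq_iff.mp h2 with ⟨h3, h4⟩ | ⟨_, h4⟩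
      · exact absurd (h3.symm.trans hu) hxy
      · exact h4
  by_cases he : s(x,y) ∈ c.edges
  · -- cycle through the pendant vertex y
    have hysup : y ∈ c.support := Walk.snd_mem_support_of_mem_edges c he
    have hc' : (c.rotate y hysup).IsCycle := hc.rotate hysup
    set c' := c.rotate y hysup with hc'def
    clear_value c'
    cases c' with
    | nil => exact hc'.ne_nil rfl
    | @cons _ z _ h q =>
      have hz : z = x := hadj h rfl
      rw [Walk.cons_isCycle_iff] at hc'
      obtain ⟨hq, hqe⟩ := hc'
      have hnn : ¬ q.reverse.Nil :=
        Walk.not_nil_of_ne (fun hyz => hxy ((hz ▸ hyz).symm))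
      obtain ⟨w, hw, q', hq'⟩ := Walk.not_nil_iff.mp hnn
      have hwx : w = x := hadj hw rfl
      apply hqe
      have h5 : s(y, z) ∈ q.reverse.edges := by
        rw [hq']
        simp [hwx, hz]
      rw [Walk.edges_reverse, List.mem_reverse] at h5
      exact h5
  · have htr : ∀ e ∈ c.edges, e ∈ G₀.edgeSet := by
      intro e hee
      have h1 : e ∈ (G₀ ⊔ SimpleGraph.fromEdgeSet {s(x,y)}).edgeSet := Walk.edges_subset_edgeSet c hee
      rw [edgeSet_sup, edgeSet_fromEdgeSet] at h1
      rcases h1 with h1 | h1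
      · exact h1
      · have : e = s(x,y) := h1.1
        subst this; exact absurd hee he
    exact hac _ (hc.transfer htr)

lemma coe_acyclic_of_spanningCoe {V : Type*} {G : SimpleGraph V} {H : G.Subgraph}
    (h : H.spanningCoe.IsAcyclic) : H.coe.IsAcyclic := by
  intro v c hc
  let f : H.coe →g H.spanningCoe := ⟨Subtype.val, fun ha => ha⟩
  exact h _ ((SimpleGraph.Walk.map_isCycle_iff_of_injective (f := f) Subtype.val_injective).mpr hc)

lemma spanningCoe_sup_subgraphOfAdj {V : Type*} {G : SimpleGraph V} (H : G.Subgraph) {x y : V}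
    (h : G.Adj x y) :
    (H ⊔ G.subgraphOfAdj h).spanningCoe = H.spanningCoe ⊔ SimpleGraph.fromEdgeSet {s(x,y)} := by
  ext u v
  simp only [Subgraph.spanningCoe_adj, Subgraph.sup_adj, subgraphOfAdj_adj, sup_adj,
    fromEdgeSet_adj, Set.mem_singleton_iff]
  constructor
  · rintro (h1 | h1)
    · exact Or.inl h1
    · refine Or.inr ⟨h1.symm, ?_⟩
      rcases Sym2.eq_iff.mp h1 with ⟨rfl, rfl⟩ | ⟨rfl, rfl⟩
      · exact h.ne
      · exact h.ne'
  · rintro (h1 | ⟨h1, _⟩)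
    · exact Or.inl h1
    · exact Or.inr h1.symm

lemma pendant_step {V : Type*} [DecidableEq V] {G : SimpleGraph V} {H : G.Subgraph} {x y : V}
    (hadj : G.Adj x y) (hx : x ∈ H.verts) (hy : y ∉ H.verts)
    (hconn : H.Connected) (hac : H.spanningCoe.IsAcyclic) :
    (H ⊔ G.subgraphOfAdj hadj).Connected ∧ (H ⊔ G.subgraphOfAdj hadj).spanningCoe.IsAcyclic := by
  constructor
  · exact Subgraph.connected_sup hconn.preconnected (Subgraph.subgraphOfAdj_connected hadj).preconnected ⟨x, hx, by simp⟩
  · rw [spanningCoe_sup_subgraphOfAdj]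
    exact acyclic_sup_edge hac hadj.ne (fun z hz => hy (Subgraph.Adj.fst_mem hz))

end Aux

open SimpleGraph in
/-- The edges of every maximal outerplanar graph on `n ≥ 2` vertices can be partitioned
into two trees: there are two subgraphs with disjoint edge sets whose union is the whole
edge set, each of which is a tree (connected and acyclic on its vertex set). -/
theorem stmt8 {V : Type*} [Fintype V] [DecidableEq V] (G : SimpleGraph V)
    (h : IsMaxOuterplanar G) (hn : 2 ≤ Fintype.card V) :
    ∃ H₁ H₂ : G.Subgraph,
      H₁.edgeSet ∪ H₂.edgeSet = G.edgeSet ∧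
      Disjoint H₁.edgeSet H₂.edgeSet ∧
      H₁.coe.IsTree ∧ H₂.coe.IsTree := by
  obtain ⟨σ, hbase, hstep⟩ := h
  have key : ∀ k : ℕ, 2 ≤ k → k ≤ Fintype.card V →
      ∃ H₁ H₂ : G.Subgraph,
        H₁.verts = {v | ((σ.symm v) : ℕ) < k} ∧
        H₂.verts = {v | 0 < ((σ.symm v) : ℕ) ∧ ((σ.symm v) : ℕ) < k} ∧
        (∀ u v : V, (H₁.Adj u v ∨ H₂.Adj u v) ↔
          (G.Adj u v ∧ ((σ.symm u) : ℕ) < k ∧ ((σ.symm v) : ℕ) < k)) ∧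
        (∀ u v : V, H₁.Adj u v → H₂.Adj u v → False) ∧
        H₁.Connected ∧ H₂.Connected ∧
        H₁.spanningCoe.IsAcyclic ∧ H₂.spanningCoe.IsAcyclic := by
    intro k hk2
    induction k, hk2 using Nat.le_induction with
    | base =>
      intro _
      set x0 := σ ⟨0, by omega⟩ with hx0
      set x1 := σ ⟨1, by omega⟩ with hx1
      have hadj01 : G.Adj x0 x1 := hbase hn
      refine ⟨G.subgraphOfAdj hadj01, G.singletonSubgraph x1, ?_, ?_, ?_, ?_, ?_, ?_, ?_, ?_⟩
      · ext v
        simp only [subgraphOfAdj_verts, Set.mem_insert_iff, Set.mem_singleton_iff,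
          Set.mem_setOf_eq]
        constructor
        · rintro (rfl | rfl) <;> simp [hx0, hx1]
        · intro hv
          rcases (by omega : ((σ.symm v) : ℕ) = 0 ∨ ((σ.symm v) : ℕ) = 1) with h0 | h0
          · left
            rw [hx0, ← (Fin.ext h0 : σ.symm v = ⟨0, by omega⟩), Equiv.apply_symm_apply]
          · right
            rw [hx1, ← (Fin.ext h0 : σ.symm v = ⟨1, by omega⟩), Equiv.apply_symm_apply]
      · ext v
        simp only [singletonSubgraph_verts, Set.mem_singleton_iff, Set.mem_setOf_eq]
        constructor
        · rintro rfl; simp [hx1]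
        · rintro ⟨h1, h2⟩
          rw [hx1, ← (Fin.ext (by omega : ((σ.symm v) : ℕ) = 1) : σ.symm v = ⟨1, by omega⟩),
            Equiv.apply_symm_apply]
      · intro u v
        simp only [subgraphOfAdj_adj, singletonSubgraph_adj, Pi.bot_apply,
          Prop.bot_eq_false, or_false]
        constructor
        · intro h1
          rcases Sym2.eq_iff.mp h1 with ⟨rfl, rfl⟩ | ⟨rfl, rfl⟩
          · exact ⟨hadj01, by simp [hx0, hx1]⟩
          · exact ⟨hadj01.symm, by simp [hx0, hx1]⟩
        · rintro ⟨hG, hu, hv⟩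
          have hu' : u = x0 ∨ u = x1 := by
            rcases (by omega : ((σ.symm u) : ℕ) = 0 ∨ ((σ.symm u) : ℕ) = 1) with h0 | h0
            · exact Or.inl (by rw [hx0, ← (Fin.ext h0 : σ.symm u = ⟨0, by omega⟩),
                Equiv.apply_symm_apply])
            · exact Or.inr (by rw [hx1, ← (Fin.ext h0 : σ.symm u = ⟨1, by omega⟩),
                Equiv.apply_symm_apply])
          have hv' : v = x0 ∨ v = x1 := by
            rcases (by omega : ((σ.symm v) : ℕ) = 0 ∨ ((σ.symm v) : ℕ) = 1) with h0 | h0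
            · exact Or.inl (by rw [hx0, ← (Fin.ext h0 : σ.symm v = ⟨0, by omega⟩),
                Equiv.apply_symm_apply])
            · exact Or.inr (by rw [hx1, ← (Fin.ext h0 : σ.symm v = ⟨1, by omega⟩),
                Equiv.apply_symm_apply])
          rcases hu' with rfl | rfl <;> rcases hv' with rfl | rfl
          · exact absurd rfl hG.ne
          · rfl
          · exact Sym2.eq_swap
          · exact absurd rfl hG.ne
      · intro u v h1 h2
        simp only [singletonSubgraph_adj, Pi.bot_apply, Prop.bot_eq_false] at h2
      · exact Subgraph.subgraphOfAdj_connected hadj01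
      · exact Subgraph.singletonSubgraph_connected
      · have heq := spanningCoe_sup_subgraphOfAdj (⊥ : G.Subgraph) hadj01
        rw [bot_sup_eq] at heq
        rw [heq, Subgraph.spanningCoe_bot]
        exact acyclic_sup_edge (by simpa using isAcyclic_bot) hadj01.ne (fun z hz => hz)
      · intro v c hc
        obtain ⟨u, hu, q, rfl⟩ := SimpleGraph.Walk.not_nil_iff.mp hc.not_nil
        simp only [Subgraph.spanningCoe_adj, singletonSubgraph_adj, Pi.bot_apply,
          Prop.bot_eq_false] at hu
    | succ k hk ih =>
      intro hk1
      obtain ⟨H₁, H₂, hv1, hv2, hun, hdis, hc1, hc2, ha1, ha2⟩ := ih (by omega)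
      set j : Fin (Fintype.card V) := ⟨k, by omega⟩ with hj
      obtain ⟨a, b, ha, hb, hab, hGab, hiff⟩ := hstep j (by simpa [hj] using hk)
      obtain ⟨p, q, hpj, hqj, hpq, hq0, hiff2⟩ :
          ∃ p q : Fin (Fintype.card V), p < j ∧ q < j ∧ p ≠ q ∧ 0 < (q:ℕ) ∧
            (∀ i, i < j → (G.Adj (σ i) (σ j) ↔ i = p ∨ i = q)) := by
        by_cases hb0 : 0 < (b:ℕ)
        · exact ⟨a, b, ha, hb, hab, hb0, hiff⟩
        · have ha0 : 0 < (a:ℕ) := by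
            rcases Nat.eq_zero_or_pos (a:ℕ) with h0 | h0
            · exact absurd (Fin.ext (by omega) : a = b) hab
            · exact h0
          exact ⟨b, a, hb, ha, hab.symm, ha0, fun i hi => (hiff i hi).trans or_comm⟩
      have hpk : ((p:ℕ)) < k := hpj
      have hqk : ((q:ℕ)) < k := hqj
      have hjk : ((j:ℕ)) = k := rfl
      have hGpj : G.Adj (σ p) (σ j) := (hiff2 p hpj).mpr (Or.inl rfl)
      have hGqj : G.Adj (σ q) (σ j) := (hiff2 q hqj).mpr (Or.inr rfl)
      have hσp1 : σ p ∈ H₁.verts := by rw [hv1]; simpa using hpk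
      have hσq2 : σ q ∈ H₂.verts := by
        rw [hv2]
        simp only [Set.mem_setOf_eq, Equiv.symm_apply_apply]
        exact ⟨hq0, hqk⟩
      have hσj1 : σ j ∉ H₁.verts := by rw [hv1]; simp [hj]
      have hσj2 : σ j ∉ H₂.verts := by rw [hv2]; simp [hj]
      obtain ⟨hc1', ha1'⟩ := pendant_step hGpj hσp1 hσj1 hc1 ha1
      obtain ⟨hc2', ha2'⟩ := pendant_step hGqj hσq2 hσj2 hc2 ha2
      refine ⟨H₁ ⊔ G.subgraphOfAdj hGpj, H₂ ⊔ G.subgraphOfAdj hGqj,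
        ?_, ?_, ?_, ?_, hc1', hc2', ha1', ha2'⟩
      · ext v
        simp only [Subgraph.verts_sup, subgraphOfAdj_verts, hv1, Set.mem_union,
          Set.mem_setOf_eq, Set.mem_insert_iff, Set.mem_singleton_iff]
        constructor
        · rintro (hv | rfl | rfl)
          · omega
          · simp only [Equiv.symm_apply_apply]; omega
          · simp only [Equiv.symm_apply_apply]; omega
        · intro hv
          rcases (by omega : ((σ.symm v) : ℕ) < k ∨ ((σ.symm v) : ℕ) = k) with h0 | h0
          · exact Or.inl h0
          · right; right
            rw [← (Fin.ext (h0.trans hjk.symm) : σ.symm v = j), Equiv.apply_symm_apply]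
      · ext v
        simp only [Subgraph.verts_sup, subgraphOfAdj_verts, hv2, Set.mem_union,
          Set.mem_setOf_eq, Set.mem_insert_iff, Set.mem_singleton_iff]
        constructor
        · rintro (⟨hv0, hv⟩ | rfl | rfl)
          · omega
          · simp only [Equiv.symm_apply_apply]; omega
          · simp only [Equiv.symm_apply_apply]; omega
        · rintro ⟨hv0, hv⟩
          rcases (by omega : ((σ.symm v) : ℕ) < k ∨ ((σ.symm v) : ℕ) = k) with h0 | h0
          · exact Or.inl ⟨hv0, h0⟩
          · right; right
            rw [← (Fin.ext (h0.trans hjk.symm) : σ.symm v = j), Equiv.apply_symm_apply]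
      · intro u v
        simp only [Subgraph.sup_adj, subgraphOfAdj_adj]
        constructor
        · rintro ((h1 | h1) | (h1 | h1))
          · obtain ⟨hG, hu, hv⟩ := (hun u v).mp (Or.inl h1); exact ⟨hG, by omega, by omega⟩
          · rcases Sym2.eq_iff.mp h1 with ⟨rfl, rfl⟩ | ⟨rfl, rfl⟩
            · refine ⟨hGpj, ?_, ?_⟩ <;> simp only [Equiv.symm_apply_apply] <;> omega
            · refine ⟨hGpj.symm, ?_, ?_⟩ <;> simp only [Equiv.symm_apply_apply] <;> omega
          · obtain ⟨hG, hu, hv⟩ := (hun u v).mp (Or.inr h1); exact ⟨hG, by omega, by omega⟩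
          · rcases Sym2.eq_iff.mp h1 with ⟨rfl, rfl⟩ | ⟨rfl, rfl⟩
            · refine ⟨hGqj, ?_, ?_⟩ <;> simp only [Equiv.symm_apply_apply] <;> omega
            · refine ⟨hGqj.symm, ?_, ?_⟩ <;> simp only [Equiv.symm_apply_apply] <;> omega
        · rintro ⟨hG, hu, hv⟩
          rcases (by omega : ((σ.symm u) : ℕ) < k ∨ ((σ.symm u) : ℕ) = k) with h0u | h0u <;>
            rcases (by omega : ((σ.symm v) : ℕ) < k ∨ ((σ.symm v) : ℕ) = k) with h0v | h0v
          · rcases (hun u v).mpr ⟨hG, h0u, h0v⟩ with h1 | h1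
            · exact Or.inl (Or.inl h1)
            · exact Or.inr (Or.inl h1)
          · -- v = σ j, u earlier
            have hvj : v = σ j := by
              rw [← (Fin.ext (h0v.trans hjk.symm) : σ.symm v = j), Equiv.apply_symm_apply]
            have hult : σ.symm u < j := by rw [Fin.lt_def]; omega
            have hGuj : G.Adj (σ (σ.symm u)) (σ j) := by
              rw [Equiv.apply_symm_apply, ← hvj]; exact hG
            rcases (hiff2 _ hult).mp hGuj with h2 | h2
            · left; right
              rw [hvj, ← h2, Equiv.apply_symm_apply]
            · right; right
              rw [hvj, ← h2, Equiv.apply_symm_apply]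
          · -- u = σ j
            have huj : u = σ j := by
              rw [← (Fin.ext (h0u.trans hjk.symm) : σ.symm u = j), Equiv.apply_symm_apply]
            have hvlt : σ.symm v < j := by rw [Fin.lt_def]; omega
            have hGvj : G.Adj (σ (σ.symm v)) (σ j) := by
              rw [Equiv.apply_symm_apply, ← huj]; exact hG.symm
            rcases (hiff2 _ hvlt).mp hGvj with h2 | h2
            · left; right
              rw [huj, ← h2, Equiv.apply_symm_apply, Sym2.eq_swap]
            · right; right
              rw [huj, ← h2, Equiv.apply_symm_apply, Sym2.eq_swap]
          · exact absurd (σ.symm.injective (Fin.ext (h0u.trans h0v.symm))) hG.ne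
      · intro u v h1 h2
        simp only [Subgraph.sup_adj, subgraphOfAdj_adj] at h1 h2
        rcases h1 with h1 | h1 <;> rcases h2 with h2 | h2
        · exact hdis u v h1 h2
        · have : σ j ∈ H₁.verts := by
            rcases Sym2.eq_iff.mp h2 with ⟨rfl, rfl⟩ | ⟨rfl, rfl⟩
            · exact (H₁.edge_vert h1.symm)
            · exact (H₁.edge_vert h1)
          exact hσj1 this
        · have : σ j ∈ H₂.verts := by
            rcases Sym2.eq_iff.mp h1 with ⟨rfl, rfl⟩ | ⟨rfl, rfl⟩
            · exact (H₂.edge_vert h2.symm)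
            · exact (H₂.edge_vert h2)
          exact hσj2 this
        · rw [← h2] at h1
          rcases Sym2.eq_iff.mp h1 with ⟨h3, _⟩ | ⟨h3, h4⟩
          · exact hpq (σ.injective h3)
          · exact (Fin.lt_iff_val_lt_val.mp hpj).ne (congrArg Fin.val (σ.injective h3))
  obtain ⟨H₁, H₂, hv1, hv2, hun, hdis, hc1, hc2, ha1, ha2⟩ :=
    key (Fintype.card V) hn le_rfl
  refine ⟨H₁, H₂, ?_, ?_, ⟨hc1.coe, coe_acyclic_of_spanningCoe ha1⟩,
    ⟨hc2.coe, coe_acyclic_of_spanningCoe ha2⟩⟩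
  · ext e
    induction e with
    | h u v =>
      simp only [Set.mem_union, Subgraph.mem_edgeSet, mem_edgeSet]
      rw [hun u v]
      exact and_iff_left ⟨(σ.symm u).isLt, (σ.symm v).isLt⟩
  · rw [Set.disjoint_left]
    intro e he1 he2
    induction e with
    | h u v =>
      rw [Subgraph.mem_edgeSet] at he1 he2
      exact hdis u v he1 he2
end

section
/- Under the iterative heavy-path-box construction, a heavy path subtree of depth d with n' vertices fits in a box of width at most 2·2^d·n' and height at most 2·(3/2)^d·n'. More precisely: if boxes B₁,…,B_k have widths w_i and heights h_i with b_i ≥ t_i (h_i = t_i + b_i), and boxes are paired so that w*_i = max{w_{2i−1}, w_{2i}} and t*_i = max{t_{2i−1}, t_{2i}}, then the merged arrangement has width w = 2·Σ_{i=1}^{k/2} w*_i ≤ 2·Σ_{i=1}^{k} w_i and height h ≤ 2·Σ_{i=1}^{k/2} t*_i + max_j b_{2j−1} + max_j b_{2j} ≤ (3/2)·Σ_{i=1}^{k} h_i. -/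
lemma sum_double_range (K : ℕ) (f : ℕ → ℝ) :
    ∑ i ∈ Finset.range (2 * K), f i
      = ∑ i ∈ Finset.range K, (f (2 * i) + f (2 * i + 1)) := by
  induction K with
  | zero => simp
  | succ n ih =>
      rw [Nat.mul_succ, Finset.sum_range_succ, Finset.sum_range_succ,
        Finset.sum_range_succ, ih]
      rw [add_assoc]

/-- Size analysis of the merged heavy-path-box arrangement. Let `k = 2K` boxes have
widths `w i`, top heights `t i` and bottom heights `b i` (all nonnegative, `t i ≤ b i`),
paired so that `b (2i+1) ≤ b (2i)`. Then the merged arrangement has width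
`2 Σ_{i<K} max(w (2i), w (2i+1)) ≤ 2 Σ_{i<2K} w i` and height
`2 Σ_{i<K} max(t (2i), t (2i+1)) + max_j b (2j) + max_j b (2j+1)
  ≤ (3/2) Σ_{i<2K} (t i + b i)`. -/
theorem stmt18 (K : ℕ) (hK : 1 ≤ K) (w t b : ℕ → ℝ)
    (hw : ∀ i < 2 * K, 0 ≤ w i)
    (ht : ∀ i < 2 * K, 0 ≤ t i)
    (htb : ∀ i < 2 * K, t i ≤ b i)
    (hpair : ∀ i < K, b (2 * i + 1) ≤ b (2 * i)) :
    2 * ∑ i ∈ Finset.range K, max (w (2 * i)) (w (2 * i + 1))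
      ≤ 2 * ∑ i ∈ Finset.range (2 * K), w i ∧
    2 * ∑ i ∈ Finset.range K, max (t (2 * i)) (t (2 * i + 1))
      + (Finset.range K).sup' (Finset.nonempty_range_iff.mpr (by omega)) (fun i => b (2 * i))
      + (Finset.range K).sup' (Finset.nonempty_range_iff.mpr (by omega)) (fun i => b (2 * i + 1))
      ≤ (3 / 2) * ∑ i ∈ Finset.range (2 * K), (t i + b i) := by
  have hb : ∀ i < 2 * K, 0 ≤ b i := fun i hi => (ht i hi).trans (htb i hi)
  constructor
  · have h1 : ∑ i ∈ Finset.range K, max (w (2 * i)) (w (2 * i + 1))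
        ≤ ∑ i ∈ Finset.range K, (w (2 * i) + w (2 * i + 1)) := by
      refine Finset.sum_le_sum fun i hi => ?_
      have hi' : i < K := Finset.mem_range.mp hi
      have h0 := hw (2 * i) (by omega)
      have h1 := hw (2 * i + 1) (by omega)
      exact max_le (by linarith) (by linarith)
    rw [sum_double_range K w]
    linarith
  · -- sup' bounds via single_le_sum
    have hBe : (Finset.range K).sup' (Finset.nonempty_range_iff.mpr (by omega))
          (fun i => b (2 * i)) ≤ ∑ i ∈ Finset.range K, b (2 * i) := by
      refine Finset.sup'_le _ _ fun j hj => ?_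
      refine Finset.single_le_sum (f := fun i => b (2 * i)) (fun i hi => ?_) hj
      exact hb (2 * i) (by have := Finset.mem_range.mp hi; omega)
    have hBo : (Finset.range K).sup' (Finset.nonempty_range_iff.mpr (by omega))
          (fun i => b (2 * i + 1)) ≤ ∑ i ∈ Finset.range K, b (2 * i + 1) := by
      refine Finset.sup'_le _ _ fun j hj => ?_
      refine Finset.single_le_sum (f := fun i => b (2 * i + 1)) (fun i hi => ?_) hj
      exact hb (2 * i + 1) (by have := Finset.mem_range.mp hi; omega)
    have hkey : ∑ i ∈ Finset.range K,
          (2 * max (t (2 * i)) (t (2 * i + 1)) + b (2 * i) + b (2 * i + 1))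
        ≤ ∑ i ∈ Finset.range K, (3 / 2) *
          ((t (2 * i) + b (2 * i)) + (t (2 * i + 1) + b (2 * i + 1))) := by
      refine Finset.sum_le_sum fun i hi => ?_
      have hi' : i < K := Finset.mem_range.mp hi
      have ht0 := ht (2 * i) (by omega)
      have ht1 := ht (2 * i + 1) (by omega)
      have htb0 := htb (2 * i) (by omega)
      have htb1 := htb (2 * i + 1) (by omega)
      rcases le_total (t (2 * i)) (t (2 * i + 1)) with h | h
      · rw [max_eq_right h]; linarith
      · rw [max_eq_left h]; linarith
    rw [sum_double_range K (fun i => t i + b i), ← Finset.mul_sum] at *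
    have hdist : ∑ i ∈ Finset.range K,
          (2 * max (t (2 * i)) (t (2 * i + 1)) + b (2 * i) + b (2 * i + 1))
        = 2 * ∑ i ∈ Finset.range K, max (t (2 * i)) (t (2 * i + 1))
          + ∑ i ∈ Finset.range K, b (2 * i)
          + ∑ i ∈ Finset.range K, b (2 * i + 1) := by
      rw [Finset.mul_sum, ← Finset.sum_add_distrib, ← Finset.sum_add_distrib]
    linarith [hkey, hBe, hBo, hdist]
end
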